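/- Let (Ω, Σ, μ) be a measure space and 1 < p ≤ 2. Then for all x, y ∈ L^p(Ω, Σ, μ), ‖x‖²_{L^p} + (p−1) ‖y‖²_{L^p} ≤ (‖x+y‖²_{L^p} + ‖x−y‖²_{L^p}) / 2. -/

import Mathlib

open Real Set MeasureTheory
open scoped ENNReal NNReal

lemma bcl_sec {p : ℝ} (hp2 : p ≤ 2) {r : ℝ} (hr0 : 0 < r) (hr1 : r < 1) :
    (2:ℝ) ≤ (1+r) ^ (p-2) + (1-r) ^ (p-2) := by
  have h1 : (0:ℝ) < 1 + r := by linarith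
  have h2 : (0:ℝ) < 1 - r := by linarith
  have ea : (1+r)^(p-2) = ((1+r)^((p-2)/2))^2 := by
    rw [← Real.rpow_natCast ((1+r)^((p-2)/2)) 2, ← Real.rpow_mul h1.le]; norm_num
  have eb : (1-r)^(p-2) = ((1-r)^((p-2)/2))^2 := by
    rw [← Real.rpow_natCast ((1-r)^((p-2)/2)) 2, ← Real.rpow_mul h2.le]; norm_num
  have hab : (1+r)^((p-2)/2) * (1-r)^((p-2)/2) = ((1+r)*(1-r))^((p-2)/2) :=
    (Real.mul_rpow h1.le h2.le).symm
  have hone : (1:ℝ) ≤ ((1+r)*(1-r))^((p-2)/2) :=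
    Real.one_le_rpow_of_pos_of_le_one_of_nonpos (by nlinarith) (by nlinarith)
      (by linarith)
  nlinarith [sq_nonneg ((1+r)^((p-2)/2) - (1-r)^((p-2)/2))]

lemma bcl_G_deriv {p : ℝ} {r : ℝ} (hr0 : 0 < r) (hr1 : r < 1) :
    HasDerivAt (fun r : ℝ => (1+r)^(p-1) - (1-r)^(p-1) - 2*(p-1)*r)
      ((p-1)*(1+r)^(p-2) + (p-1)*(1-r)^(p-2) - 2*(p-1)) r := by
  have h1 : (0:ℝ) < 1 + r := by linarith
  have h2 : (0:ℝ) < 1 - r := by linarith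
  have hA : HasDerivAt (fun r : ℝ => (1+r)^(p-1)) (1 * (p-1) * (1+r)^(p-1-1)) r :=
    ((hasDerivAt_id r).const_add 1).rpow_const (Or.inl h1.ne')
  have hB : HasDerivAt (fun r : ℝ => (1-r)^(p-1)) (-1 * (p-1) * (1-r)^(p-1-1)) r :=
    ((hasDerivAt_id r).const_sub 1).rpow_const (Or.inl h2.ne')
  have hC : HasDerivAt (fun r : ℝ => 2*(p-1)*r) (2*(p-1)) r := by
    simpa using (hasDerivAt_id r).const_mul (2*(p-1))
  have := (hA.sub hB).sub hC
  exact this.congr_deriv (by ring_nf)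

lemma bcl_G_nonneg {p : ℝ} (hp1 : 1 < p) (hp2 : p ≤ 2) {r : ℝ} (hr0 : 0 ≤ r) (hr1 : r ≤ 1) :
    0 ≤ (1+r)^(p-1) - (1-r)^(p-1) - 2*(p-1)*r := by
  set G : ℝ → ℝ := fun r => (1+r)^(p-1) - (1-r)^(p-1) - 2*(p-1)*r with hG
  have hcont : ContinuousOn G (Set.Icc 0 1) := by
    apply ContinuousOn.sub
    apply ContinuousOn.sub
    · exact (continuousOn_const.add continuousOn_id).rpow_const
        (fun x _ => Or.inr (by linarith))
    · exact (continuousOn_const.sub continuousOn_id).rpow_const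
        (fun x _ => Or.inr (by linarith))
    · exact (continuous_const.mul continuous_id).continuousOn
  have hmono : MonotoneOn G (Set.Icc 0 1) := by
    apply monotoneOn_of_deriv_nonneg (convex_Icc 0 1) hcont
    · intro x hx
      rw [interior_Icc] at hx
      exact (bcl_G_deriv hx.1 hx.2).differentiableAt.differentiableWithinAt
    · intro x hx
      rw [interior_Icc] at hx
      rw [(bcl_G_deriv hx.1 hx.2).deriv]
      have := bcl_sec hp2 hx.1 hx.2
      nlinarith
  rcases eq_or_lt_of_le hr1 with h | h
  · -- r = 1 : continuity limit? handle by direct evaluation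
    subst h
    have h0 : G 0 ≤ G 1 := hmono (by simp) (by norm_num) (by norm_num)
    simpa [hG, Real.zero_rpow (by linarith : p - 1 ≠ 0)] using h0
  · have h0 : G 0 ≤ G r := hmono (by simp) (by constructor <;> linarith) hr0
    simpa [hG] using h0

lemma bcl_even {p : ℝ} (hp1 : 1 < p) (hp2 : p ≤ 2) {r : ℝ} (hr0 : 0 ≤ r) (hr1 : r ≤ 1) :
    2 + p*(p-1)*r^2 ≤ (1+r)^p + (1-r)^p := by
  set F : ℝ → ℝ := fun r => (1+r)^p + (1-r)^p - p*(p-1)*r^2 with hF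
  have hFd : ∀ x : ℝ, 0 < x → x < 1 → HasDerivAt F
      (p * ((1+x)^(p-1) - (1-x)^(p-1) - 2*(p-1)*x)) x := by
    intro x hx0 hx1
    have h1 : (0:ℝ) < 1 + x := by linarith
    have h2 : (0:ℝ) < 1 - x := by linarith
    have hA : HasDerivAt (fun r : ℝ => (1+r)^p) (1 * p * (1+x)^(p-1)) x :=
      ((hasDerivAt_id x).const_add 1).rpow_const (Or.inl h1.ne')
    have hB : HasDerivAt (fun r : ℝ => (1-r)^p) (-1 * p * (1-x)^(p-1)) x :=
      ((hasDerivAt_id x).const_sub 1).rpow_const (Or.inl h2.ne')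
    have hC : HasDerivAt (fun r : ℝ => p*(p-1)*r^2) (p*(p-1)*(2*x)) x := by
      simpa using ((hasDerivAt_pow 2 x).const_mul (p*(p-1)))
    have := (hA.add hB).sub hC
    exact this.congr_deriv (by push_cast; ring_nf)
  have hcont : ContinuousOn F (Set.Icc 0 1) := by
    apply ContinuousOn.sub
    apply ContinuousOn.add
    · exact (continuousOn_const.add continuousOn_id).rpow_const
        (fun x _ => Or.inr (by linarith))
    · exact (continuousOn_const.sub continuousOn_id).rpow_const
        (fun x _ => Or.inr (by linarith))
    · exact (continuous_const.mul (continuous_pow 2)).continuousOn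
  have hmono : MonotoneOn F (Set.Icc 0 1) := by
    apply monotoneOn_of_deriv_nonneg (convex_Icc 0 1) hcont
    · intro x hx
      rw [interior_Icc] at hx
      exact (hFd x hx.1 hx.2).differentiableAt.differentiableWithinAt
    · intro x hx
      rw [interior_Icc] at hx
      rw [(hFd x hx.1 hx.2).deriv]
      have := bcl_G_nonneg hp1 hp2 hx.1.le hx.2.le
      nlinarith
  have h0 : F 0 ≤ F r := hmono (by simp) (by constructor <;> linarith) hr0
  have : F 0 = 2 := by norm_num [hF]
  rw [this] at h0
  simp only [hF] at h0
  linarith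

-- the two-point inequality for 0 ≤ b ≤ a
lemma bcl_twopoint_aux {p : ℝ} (hp1 : 1 < p) (hp2 : p ≤ 2) {a b : ℝ}
    (hb : 0 ≤ b) (hba : b ≤ a) :
    (a^2 + (p-1)*b^2) ^ (p/2) ≤ ((a+b)^p + (a-b)^p) / 2 := by
  rcases eq_or_lt_of_le (hb.trans hba) with h | ha
  · have hb0 : b = 0 := le_antisymm (h ▸ hba) hb
    rw [← h, hb0]
    simp [Real.zero_rpow (show p ≠ 0 by positivity),
      Real.zero_rpow (show p/2 ≠ 0 by positivity)]
  · set r := b / a with hr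
    have hr0 : 0 ≤ r := by positivity
    have hr1 : r ≤ 1 := by rw [hr, div_le_one ha]; exact hba
    -- Bernoulli step
    have hbern : (1 + (p-1)*r^2) ^ (p/2) ≤ 1 + (p/2) * ((p-1)*r^2) := by
      have := rpow_one_add_le_one_add_mul_self
        (s := (p-1)*r^2) (by nlinarith) (p := p/2) (by linarith) (by linarith)
      simpa [add_comm] using this
    have heven : 1 + (p/2) * ((p-1)*r^2) ≤ ((1+r)^p + (1-r)^p) / 2 := by
      have := bcl_even hp1 hp2 hr0 hr1
      linarith
    -- scale by a^p
    have key : (1 + (p-1)*r^2) ^ (p/2) ≤ ((1+r)^p + (1-r)^p) / 2 :=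
      hbern.trans heven
    have hscale := mul_le_mul_of_nonneg_left key (by positivity : (0:ℝ) ≤ a^p)
    have hX : (0:ℝ) ≤ 1 + (p-1)*r^2 := by nlinarith
    have hsq : ((a^2 : ℝ)) ^ (p/2) = a ^ p := by
      rw [← Real.rpow_natCast a 2, ← Real.rpow_mul ha.le,
        show ((2:ℕ):ℝ) * (p/2) = p by push_cast; ring]
    calc (a^2 + (p-1)*b^2) ^ (p/2)
        = (a^2 * (1 + (p-1)*r^2)) ^ (p/2) := by
          congr 1
          rw [hr]; field_simp
      _ = a^p * (1 + (p-1)*r^2) ^ (p/2) := by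
          rw [Real.mul_rpow (by positivity) hX, hsq]
      _ ≤ a^p * (((1+r)^p + (1-r)^p) / 2) := hscale
      _ = ((a+b)^p + (a-b)^p) / 2 := by
          have e1 : a * (1+r) = a + b := by rw [hr]; field_simp
          have e2 : a * (1-r) = a - b := by rw [hr]; field_simp
          rw [← mul_div_assoc, mul_add, ← Real.mul_rpow ha.le (by linarith),
            ← Real.mul_rpow ha.le (by linarith), e1, e2]

lemma bcl_twopoint {p : ℝ} (hp1 : 1 < p) (hp2 : p ≤ 2) (a b : ℝ) :
    (a^2 + (p-1)*b^2) ^ (p/2) ≤ (|a+b|^p + |a-b|^p) / 2 := by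
  have habs : |a+b| ^ p + |a-b| ^ p = (|a|+|b|) ^ p + |(|a|-|b|)| ^ p := by
    rcases le_or_gt 0 a with ha | ha <;> rcases le_or_gt 0 b with hb | hb
    · rw [abs_of_nonneg ha, abs_of_nonneg hb, abs_of_nonneg (by linarith : (0:ℝ) ≤ a + b)]
    · rw [abs_of_nonneg ha, abs_of_nonpos hb.le,
        abs_of_nonneg (by linarith : (0:ℝ) ≤ a - b),
        show a + -b = a - b by ring, show a - -b = a + b by ring]
      ring
    · rw [abs_of_nonpos ha.le, abs_of_nonneg hb,
        abs_of_nonpos (by linarith : a - b ≤ 0),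
        show -a + b = -(a - b) by ring, show -a - b = -(a+b) by ring, abs_neg]
      ring
    · rw [abs_of_nonpos ha.le, abs_of_nonpos hb.le,
        abs_of_nonpos (by linarith : a + b ≤ 0),
        show -a + -b = -(a+b) by ring, show -a - -b = -(a-b) by ring, abs_neg]
  rw [habs]
  rw [show a^2 = |a|^2 from (sq_abs a).symm, show b^2 = |b|^2 from (sq_abs b).symm]
  rcases le_or_gt |b| |a| with h | h
  · rw [abs_of_nonneg (by linarith : (0:ℝ) ≤ |a| - |b|)]
    exact bcl_twopoint_aux hp1 hp2 (abs_nonneg b) h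
  · rw [abs_of_nonpos (by linarith : |a| - |b| ≤ 0), show -(|a|-|b|) = |b| - |a| by ring]
    have := bcl_twopoint_aux hp1 hp2 (abs_nonneg a) h.le
    have hsq : |a| * |a| ≤ |b| * |b| :=
      mul_le_mul h.le h.le (abs_nonneg a) (abs_nonneg b)
    refine le_trans (Real.rpow_le_rpow ?_ ?_ (by positivity)) (this.trans ?_)
    · nlinarith [sq_nonneg (|a|), sq_nonneg (|b|)]
    · nlinarith
    · rw [add_comm (|b|) (|a|)]

lemma rev_minkowski {Ω : Type*} [MeasurableSpace Ω] (μ : Measure Ω) {r : ℝ}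
    (hr0 : 0 < r) (hr1 : r ≤ 1) {u v : Ω → ℝ≥0∞}
    (hu : AEMeasurable u μ) (hv : AEMeasurable v μ)
    (hfin : ∀ ω, u ω + v ω ≠ ∞) :
    (∫⁻ ω, (u ω) ^ r ∂μ) ^ (1/r) + (∫⁻ ω, (v ω) ^ r ∂μ) ^ (1/r)
      ≤ (∫⁻ ω, (u ω + v ω) ^ r ∂μ) ^ (1/r) := by
  rcases eq_or_lt_of_le hr1 with rfl | hrlt
  · simp only [ENNReal.rpow_one, one_div, inv_one]
    rw [lintegral_add_left' hu]
  set S : Ω → ℝ≥0∞ := fun ω => u ω + v ω with hS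
  have hSm : AEMeasurable S μ := hu.add hv
  set T : ℝ≥0∞ := ∫⁻ ω, (S ω) ^ r ∂μ with hT
  rcases eq_or_ne T ∞ with hTtop | hTtop
  · rw [hTtop, ENNReal.top_rpow_of_pos (by positivity)]
    exact le_top
  rcases eq_or_ne T 0 with hT0 | hT0
  · have hS0 : (fun ω => (S ω) ^ r) =ᵐ[μ] 0 :=
      (lintegral_eq_zero_iff' (hSm.pow_const r)).mp hT0
    have hu0 : ∀ᵐ ω ∂μ, (u ω) ^ r = 0 := by
      filter_upwards [hS0] with ω hω
      simp only [Pi.zero_apply, ENNReal.rpow_eq_zero_iff_of_pos hr0] at hω ⊢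
      exact (add_eq_zero.mp hω).1
    have hv0 : ∀ᵐ ω ∂μ, (v ω) ^ r = 0 := by
      filter_upwards [hS0] with ω hω
      simp only [Pi.zero_apply, ENNReal.rpow_eq_zero_iff_of_pos hr0] at hω ⊢
      exact (add_eq_zero.mp hω).2
    rw [lintegral_congr_ae hu0, lintegral_congr_ae hv0, lintegral_zero,
      ENNReal.zero_rpow_of_pos (by positivity), add_zero]
    exact zero_le
  -- main case
  have hconj : Real.HolderConjugate (1/r) (1/(1-r)) := by
    rw [Real.holderConjugate_iff]
    constructor
    · rw [lt_div_iff₀ hr0]; linarith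
    · simp only [one_div, inv_inv]; ring
  have holder : ∀ w : Ω → ℝ≥0∞, AEMeasurable w μ → (∀ ω, w ω ≤ S ω) →
      (∫⁻ ω, (w ω) ^ r ∂μ) ^ (1/r) ≤ (∫⁻ ω, w ω * (S ω) ^ (r-1) ∂μ) * T ^ ((1-r)/r) := by
    intro w hw hwS
    have hFG : ∀ ω, (w ω * (S ω) ^ (r-1)) ^ r * (S ω) ^ (r*(1-r)) = (w ω) ^ r := by
      intro ω
      rcases eq_or_ne (S ω) 0 with h0 | h0
      · have hw0 : w ω = 0 := le_antisymm (h0 ▸ hwS ω) zero_le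
        rw [hw0, h0, zero_mul, ENNReal.zero_rpow_of_pos hr0,
          ENNReal.zero_rpow_of_pos (by nlinarith), zero_mul]
      · rw [ENNReal.mul_rpow_of_nonneg _ _ hr0.le, ← ENNReal.rpow_mul,
          mul_assoc, ← ENNReal.rpow_add _ _ h0 (hfin ω)]
        have : (r - 1) * r + r * (1 - r) = 0 := by ring
        rw [this, ENNReal.rpow_zero, mul_one]
    have hH := ENNReal.lintegral_mul_le_Lp_mul_Lq μ hconj
      (((hw.mul (hSm.pow_const (r-1))).pow_const r))
      ((hSm.pow_const (r*(1-r))))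
    simp only [Pi.mul_apply] at hH
    simp_rw [hFG] at hH
    have e1 : ∀ ω, ((w ω * (S ω) ^ (r-1)) ^ r) ^ (1/r) = w ω * (S ω) ^ (r-1) := by
      intro ω
      rw [← ENNReal.rpow_mul, mul_one_div, div_self hr0.ne', ENNReal.rpow_one]
    have e2 : ∀ ω, ((S ω) ^ (r*(1-r))) ^ (1/(1-r)) = (S ω) ^ r := by
      intro ω
      rw [← ENNReal.rpow_mul, mul_assoc, mul_one_div, div_self (by linarith), mul_one]
    simp_rw [e1, e2] at hH
    calc (∫⁻ ω, (w ω) ^ r ∂μ) ^ (1/r)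
        ≤ (((∫⁻ ω, w ω * (S ω) ^ (r-1) ∂μ) ^ (1/(1/r))) * T ^ (1/(1/(1-r)))) ^ (1/r) :=
          ENNReal.rpow_le_rpow hH (by positivity)
      _ = (∫⁻ ω, w ω * (S ω) ^ (r-1) ∂μ) * T ^ ((1-r)/r) := by
          rw [ENNReal.mul_rpow_of_nonneg _ _ (by positivity), ← ENNReal.rpow_mul,
            ← ENNReal.rpow_mul, one_div_one_div, one_div_one_div,
            mul_one_div, div_self hr0.ne', ENNReal.rpow_one, mul_one_div]
  have hu' := holder u hu (fun ω => le_add_right (le_refl (u ω)))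
  have hv' := holder v hv (fun ω => le_add_left (le_refl (v ω)))
  have hsum : (∫⁻ ω, u ω * (S ω) ^ (r-1) ∂μ) + (∫⁻ ω, v ω * (S ω) ^ (r-1) ∂μ) = T := by
    rw [← lintegral_add_left' (f := fun ω => u ω * S ω ^ (r-1)) (hu.mul (hSm.pow_const (r-1)))]
    apply lintegral_congr
    intro ω
    rcases eq_or_ne (S ω) 0 with h0 | h0
    · obtain ⟨hu0, hv0⟩ := add_eq_zero.mp (show u ω + v ω = 0 from h0)
      simp [hu0, hv0, show S ω = 0 from h0, ENNReal.zero_rpow_of_pos hr0]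
    · rw [← add_mul]
      show S ω * (S ω) ^ (r-1) = (S ω) ^ r
      have e : S ω * (S ω) ^ (r-1) = (S ω) ^ (1:ℝ) * (S ω) ^ (r-1) := by
        rw [ENNReal.rpow_one]
      rw [e, ← ENNReal.rpow_add _ _ h0 (hfin ω)]
      norm_num
  calc (∫⁻ ω, (u ω) ^ r ∂μ) ^ (1/r) + (∫⁻ ω, (v ω) ^ r ∂μ) ^ (1/r)
      ≤ ((∫⁻ ω, u ω * (S ω) ^ (r-1) ∂μ) + (∫⁻ ω, v ω * (S ω) ^ (r-1) ∂μ)) * T ^ ((1-r)/r) := by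
        rw [add_mul]; exact add_le_add hu' hv'
    _ = T * T ^ ((1-r)/r) := by rw [hsum]
    _ = T ^ (1/r) := by
        have e : T * T ^ ((1-r)/r) = T ^ (1:ℝ) * T ^ ((1-r)/r) := by
          rw [ENNReal.rpow_one]
        rw [e, ← ENNReal.rpow_add _ _ hT0 hTtop]
        congr 1
        field_simp
        ring

lemma bcl_pointwise {p : ℝ} (hp1 : 1 < p) (hp2 : p ≤ 2) (a b : ℝ) :
    ((‖a‖₊ : ℝ≥0∞) ^ (2:ℝ) + ENNReal.ofReal (p-1) * (‖b‖₊ : ℝ≥0∞) ^ (2:ℝ)) ^ (p/2)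
      ≤ ((‖a+b‖₊ : ℝ≥0∞) ^ p + (‖a-b‖₊ : ℝ≥0∞) ^ p) * 2⁻¹ := by
  have hp0 : (0:ℝ) < p := by linarith
  have e2 : ∀ t : ℝ, ∀ q : ℝ, 0 ≤ q → (‖t‖₊ : ℝ≥0∞) ^ q = ENNReal.ofReal (|t| ^ q) := by
    intro t q hq
    rw [← enorm_eq_nnnorm, ← ofReal_norm, Real.norm_eq_abs,
      ENNReal.ofReal_rpow_of_nonneg (abs_nonneg t) hq]
  have hL : (‖a‖₊ : ℝ≥0∞) ^ (2:ℝ) + ENNReal.ofReal (p-1) * (‖b‖₊ : ℝ≥0∞) ^ (2:ℝ)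
      = ENNReal.ofReal (a^2 + (p-1)*b^2) := by
    rw [e2 a 2 (by norm_num), e2 b 2 (by norm_num),
      ← ENNReal.ofReal_mul (by linarith),
      ← ENNReal.ofReal_add (by positivity) (mul_nonneg (by linarith) (by positivity)),
      Real.rpow_two, Real.rpow_two, sq_abs, sq_abs]
  rw [hL, ENNReal.ofReal_rpow_of_nonneg
    (by nlinarith [sq_nonneg a, sq_nonneg b]) (by positivity)]
  have key := bcl_twopoint hp1 hp2 a b
  calc ENNReal.ofReal ((a^2 + (p-1)*b^2) ^ (p/2))
      ≤ ENNReal.ofReal ((|a+b|^p + |a-b|^p) / 2) := ENNReal.ofReal_le_ofReal key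
    _ = ((‖a+b‖₊ : ℝ≥0∞) ^ p + (‖a-b‖₊ : ℝ≥0∞) ^ p) * 2⁻¹ := by
        rw [div_eq_mul_inv, ENNReal.ofReal_mul (by positivity),
          ENNReal.ofReal_add (by positivity) (by positivity),
          e2 (a+b) p hp0.le, e2 (a-b) p hp0.le]
        congr 1
        rw [ENNReal.ofReal_inv_of_pos (by norm_num)]
        norm_num

theorem stmt14 {Ω : Type*} [MeasurableSpace Ω] (μ : Measure Ω)
    {p : ℝ} (hp1 : 1 < p) (hp2 : p ≤ 2) (x y : Lp ℝ (ENNReal.ofReal p) μ) :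
    ‖x‖ ^ 2 + (p - 1) * ‖y‖ ^ 2 ≤ (‖x + y‖ ^ 2 + ‖x - y‖ ^ 2) / 2 := by
  have hp0 : (0:ℝ) < p := by linarith
  revert x y
  set P := ENNReal.ofReal p with hPdef
  intro x y
  have hPtoReal : P.toReal = p := ENNReal.toReal_ofReal hp0.le
  have hP0 : P ≠ 0 := by simp [hPdef, ENNReal.ofReal_eq_zero]; linarith
  have hPtop : P ≠ ∞ := ENNReal.ofReal_ne_top
  set c : ℝ≥0∞ := ENNReal.ofReal (p-1) with hc
  set r : ℝ := p/2 with hrdef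
  have hr0 : (0:ℝ) < r := by rw [hrdef]; linarith
  have hr1 : r ≤ 1 := by rw [hrdef]; linarith
  have hinv : (1:ℝ)/r = 2/p := by rw [hrdef, one_div_div]
  set I : (Ω → ℝ) → ℝ≥0∞ := fun h => ∫⁻ ω, (‖h ω‖₊ : ℝ≥0∞) ^ p ∂μ with hI
  have hE : ∀ z : Lp ℝ P μ, eLpNorm z P μ = (I z) ^ (1/p) := by
    intro z
    rw [eLpNorm_eq_lintegral_rpow_enorm_toReal hP0 hPtop, hPtoReal]
    rfl
  have hIfin : ∀ z : Lp ℝ P μ, I z ≠ ∞ := by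
    intro z htop
    have h1 := Lp.eLpNorm_lt_top z
    rw [hE z, htop, ENNReal.top_rpow_of_pos (by positivity)] at h1
    exact (lt_irrefl _ h1).elim
  have hnorm2 : ∀ z : Lp ℝ P μ, ‖z‖ ^ 2 = ((I z) ^ ((2:ℝ)/p)).toReal := by
    intro z
    rw [Lp.norm_def, hE z, ← Real.rpow_two, ENNReal.toReal_rpow, ← ENNReal.rpow_mul]
    congr 2
    field_simp
  -- measurable data
  have hfm : AEMeasurable (fun ω => (‖(x : Ω → ℝ) ω‖₊ : ℝ≥0∞)) μ :=
    (Lp.aestronglyMeasurable x).enorm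
  have hgm : AEMeasurable (fun ω => (‖(y : Ω → ℝ) ω‖₊ : ℝ≥0∞)) μ :=
    (Lp.aestronglyMeasurable y).enorm
  set u : Ω → ℝ≥0∞ := fun ω => (‖(x : Ω → ℝ) ω‖₊ : ℝ≥0∞) ^ (2:ℝ) with hu
  set v : Ω → ℝ≥0∞ := fun ω => c * (‖(y : Ω → ℝ) ω‖₊ : ℝ≥0∞) ^ (2:ℝ) with hv
  have hum : AEMeasurable u μ := hfm.pow_const _
  have hvm : AEMeasurable v μ := (hgm.pow_const _).const_mul c
  have hfin : ∀ ω, u ω + v ω ≠ ∞ := by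
    intro ω
    apply ENNReal.add_ne_top.mpr
    refine ⟨ENNReal.rpow_ne_top_of_nonneg (by norm_num) ENNReal.coe_ne_top, ?_⟩
    exact ENNReal.mul_ne_top ENNReal.ofReal_ne_top
      (ENNReal.rpow_ne_top_of_nonneg (by norm_num) ENNReal.coe_ne_top)
  -- step A : identify the two lower terms
  have hA : (∫⁻ ω, (u ω) ^ r ∂μ) ^ ((1:ℝ)/r) = (I x) ^ ((2:ℝ)/p) := by
    have e : ∀ ω, (u ω) ^ r = (‖(x : Ω → ℝ) ω‖₊ : ℝ≥0∞) ^ p := by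
      intro ω
      rw [hu, ← ENNReal.rpow_mul]
      congr 1
      rw [hrdef]; ring
    rw [lintegral_congr e, hinv]
  have hB : (∫⁻ ω, (v ω) ^ r ∂μ) ^ ((1:ℝ)/r) = c * (I y) ^ ((2:ℝ)/p) := by
    have e : ∀ ω, (v ω) ^ r = c ^ r * (‖(y : Ω → ℝ) ω‖₊ : ℝ≥0∞) ^ p := by
      intro ω
      rw [hv, ENNReal.mul_rpow_of_nonneg _ _ hr0.le, ← ENNReal.rpow_mul]
      congr 2
      rw [hrdef]; ring
    rw [lintegral_congr e,
      lintegral_const_mul' _ _ (ENNReal.rpow_ne_top_of_nonneg hr0.le ENNReal.ofReal_ne_top),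
      ENNReal.mul_rpow_of_nonneg _ _ (by positivity), ← ENNReal.rpow_mul,
      mul_one_div, div_self hr0.ne', ENNReal.rpow_one, hinv]
  -- step B : reverse Minkowski
  have hRM := rev_minkowski μ hr0 hr1 hum hvm hfin
  -- step C : pointwise two-point bound and identification
  have hxyae : ∫⁻ ω, ((‖(x : Ω → ℝ) ω + (y : Ω → ℝ) ω‖₊ : ℝ≥0∞)) ^ p ∂μ = I ⇑(x + y) := by
    rw [hI]
    apply lintegral_congr_ae
    filter_upwards [Lp.coeFn_add x y] with ω hω
    rw [hω, Pi.add_apply]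
  have hxmyae : ∫⁻ ω, ((‖(x : Ω → ℝ) ω - (y : Ω → ℝ) ω‖₊ : ℝ≥0∞)) ^ p ∂μ = I ⇑(x - y) := by
    rw [hI]
    apply lintegral_congr_ae
    filter_upwards [Lp.coeFn_sub x y] with ω hω
    rw [hω, Pi.sub_apply]
  have hPW : (∫⁻ ω, (u ω + v ω) ^ r ∂μ) ≤ ((I ⇑(x + y)) + (I ⇑(x - y))) * 2⁻¹ := by
    have hsum : (∫⁻ ω, (u ω + v ω) ^ r ∂μ)
        ≤ ∫⁻ ω, ((‖(x : Ω → ℝ) ω + (y : Ω → ℝ) ω‖₊ : ℝ≥0∞) ^ p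
            + (‖(x : Ω → ℝ) ω - (y : Ω → ℝ) ω‖₊ : ℝ≥0∞) ^ p) * 2⁻¹ ∂μ := by
      apply lintegral_mono
      intro ω
      have := bcl_pointwise hp1 hp2 ((x : Ω → ℝ) ω) ((y : Ω → ℝ) ω)
      rw [hu, hv, hrdef]
      exact this
    refine hsum.trans ?_
    have hmeas : AEMeasurable
        (fun ω => ((‖(x : Ω → ℝ) ω + (y : Ω → ℝ) ω‖₊ : ℝ≥0∞)) ^ p) μ :=
      (((Lp.aestronglyMeasurable x).add (Lp.aestronglyMeasurable y)).enorm).pow_const _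
    rw [lintegral_mul_const' _ _ (by norm_num), lintegral_add_left' hmeas, hxyae, hxmyae]
  -- step D : power mean
  have hpm : (((I ⇑(x + y)) + (I ⇑(x - y))) * 2⁻¹) ^ ((1:ℝ)/r)
      ≤ (2⁻¹ * (I ⇑(x+y)) ^ ((2:ℝ)/p) + 2⁻¹ * (I ⇑(x-y)) ^ ((2:ℝ)/p)) := by
    rw [hinv]
    have harr := ENNReal.rpow_arith_mean_le_arith_mean2_rpow 2⁻¹ 2⁻¹
      (I ⇑(x+y)) (I ⇑(x-y)) ENNReal.inv_two_add_inv_two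
      (show 1 ≤ (2:ℝ)/p from by rw [le_div_iff₀ hp0]; linarith)
    calc (((I ⇑(x + y)) + (I ⇑(x - y))) * 2⁻¹) ^ ((2:ℝ)/p)
        = (2⁻¹ * (I ⇑(x+y)) + 2⁻¹ * (I ⇑(x-y))) ^ ((2:ℝ)/p) := by
          congr 1
          ring
      _ ≤ _ := harr
  -- assemble the ENNReal key inequality
  have key : (I x) ^ ((2:ℝ)/p) + c * (I y) ^ ((2:ℝ)/p)
      ≤ 2⁻¹ * (I ⇑(x+y)) ^ ((2:ℝ)/p) + 2⁻¹ * (I ⇑(x-y)) ^ ((2:ℝ)/p) := by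
    rw [← hA, ← hB]
    refine hRM.trans ?_
    refine le_trans (ENNReal.rpow_le_rpow hPW (by positivity)) hpm
  -- convert to the real statement
  rw [hnorm2 x, hnorm2 y, hnorm2 (x+y), hnorm2 (x-y)]
  have hex : (I x) ^ ((2:ℝ)/p) ≠ ∞ := ENNReal.rpow_ne_top_of_nonneg (by positivity) (hIfin x)
  have hey : (I y) ^ ((2:ℝ)/p) ≠ ∞ := ENNReal.rpow_ne_top_of_nonneg (by positivity) (hIfin y)
  have hea : (I ⇑(x+y)) ^ ((2:ℝ)/p) ≠ ∞ :=
    ENNReal.rpow_ne_top_of_nonneg (by positivity) (hIfin (x+y))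
  have heb : (I ⇑(x-y)) ^ ((2:ℝ)/p) ≠ ∞ :=
    ENNReal.rpow_ne_top_of_nonneg (by positivity) (hIfin (x-y))
  have hL : ((I x) ^ ((2:ℝ)/p)).toReal + (p-1) * ((I y) ^ ((2:ℝ)/p)).toReal
      = ((I x) ^ ((2:ℝ)/p) + c * (I y) ^ ((2:ℝ)/p)).toReal := by
    rw [ENNReal.toReal_add hex (ENNReal.mul_ne_top ENNReal.ofReal_ne_top hey),
      ENNReal.toReal_mul, ENNReal.toReal_ofReal (by linarith : (0:ℝ) ≤ p - 1)]
  have hR : (((I ⇑(x+y)) ^ ((2:ℝ)/p)).toReal + ((I ⇑(x-y)) ^ ((2:ℝ)/p)).toReal) / 2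
      = (2⁻¹ * (I ⇑(x+y)) ^ ((2:ℝ)/p) + 2⁻¹ * (I ⇑(x-y)) ^ ((2:ℝ)/p)).toReal := by
    rw [ENNReal.toReal_add (ENNReal.mul_ne_top (by norm_num) hea)
        (ENNReal.mul_ne_top (by norm_num) heb),
      ENNReal.toReal_mul, ENNReal.toReal_mul]
    norm_num
    ring
  rw [hL, hR]
  apply ENNReal.toReal_mono ?_ key
  exact ENNReal.add_ne_top.mpr
    ⟨ENNReal.mul_ne_top (by norm_num) hea, ENNReal.mul_ne_top (by norm_num) heb⟩
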